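/- Let C be a pointed category with binary products having normal projections. Then any object X admits at most one subtraction: if s, s' : X × X → X both satisfy s(x,x) = 0 and s(x,0) = x (and likewise for s'), then s = s'. -/

import Mathlib

open CategoryTheory Limits

/-- `q : B ⟶ Q` is a cokernel of `m : A ⟶ B`. -/
def IsCokernelOf {C : Type*} [Category C] [HasZeroMorphisms C]
    {A B Q : C} (m : A ⟶ B) (q : B ⟶ Q) : Prop :=
  m ≫ q = 0 ∧ ∀ ⦃T : C⦄ (f : B ⟶ T), m ≫ f = 0 → ∃! u : Q ⟶ T, f = q ≫ u

private lemma diag_comp {C : Type*} [Category C] [HasZeroMorphisms C] [HasBinaryProducts C]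
    {X Y : C} (t : X ⨯ X ⟶ X) (ht : prod.lift (𝟙 X) (𝟙 X) ≫ t = 0) (g : Y ⟶ X) :
    prod.lift g g ≫ t = 0 := by
  have h : prod.lift g g = g ≫ prod.lift (𝟙 X) (𝟙 X) := by simp
  rw [h, Category.assoc, ht, comp_zero]

private lemma zero_comp' {C : Type*} [Category C] [HasZeroMorphisms C] [HasBinaryProducts C]
    {X Y : C} (t : X ⨯ X ⟶ X) (ht : prod.lift (𝟙 X) (0 : X ⟶ X) ≫ t = 𝟙 X) (g : Y ⟶ X) :
    prod.lift g (0 : Y ⟶ X) ≫ t = g := by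
  have h : prod.lift g (0 : Y ⟶ X) = g ≫ prod.lift (𝟙 X) (0 : X ⟶ X) := by simp
  rw [h, Category.assoc, ht, Category.comp_id]

/-- In a pointed category with binary products having normal projections, any object
admits at most one subtraction. -/
theorem stmt10 {C : Type*} [Category C] [HasZeroObject C] [HasZeroMorphisms C]
    [HasBinaryProducts C]
    (H : ∀ A B : C, IsCokernelOf (prod.lift (𝟙 A) (0 : A ⟶ B)) (prod.snd : A ⨯ B ⟶ B))
    {X : C} (s s' : X ⨯ X ⟶ X)
    (hs1 : prod.lift (𝟙 X) (𝟙 X) ≫ s = 0)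
    (hs2 : prod.lift (𝟙 X) (0 : X ⟶ X) ≫ s = 𝟙 X)
    (hs'1 : prod.lift (𝟙 X) (𝟙 X) ≫ s' = 0)
    (hs'2 : prod.lift (𝟙 X) (0 : X ⟶ X) ≫ s' = 𝟙 X) :
    s = s' := by
  obtain ⟨h0, hfact⟩ := H X (X ⨯ X)
  -- f(z,(x,y)) = s'(s(x,z), s(y,z))
  set f : X ⨯ (X ⨯ X) ⟶ X :=
    prod.lift (prod.lift (prod.snd ≫ prod.fst) prod.fst ≫ s)
      (prod.lift (prod.snd ≫ prod.snd) prod.fst ≫ s) ≫ s' with hf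
  have hf0 : prod.lift (𝟙 X) (0 : X ⟶ X ⨯ X) ≫ f = 0 := by
    have h1 : prod.lift (𝟙 X) (0 : X ⟶ X ⨯ X) ≫ f =
        prod.lift (prod.lift (0 : X ⟶ X) (𝟙 X) ≫ s)
          (prod.lift (0 : X ⟶ X) (𝟙 X) ≫ s) ≫ s' := by
      simp only [hf, prod.comp_lift_assoc, prod.comp_lift, prod.lift_fst, prod.lift_snd_assoc, prod.lift_fst_assoc, prod.lift_snd]; simp
    rw [h1, diag_comp s' hs'1]
  obtain ⟨u, hu, -⟩ := hfact _ hf0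
  have hg1 : prod.lift (0 : X ⨯ X ⟶ X) (𝟙 (X ⨯ X)) ≫ f = s' := by
    have h1 : prod.lift (0 : X ⨯ X ⟶ X) (𝟙 (X ⨯ X)) ≫ f =
        prod.lift (prod.lift (prod.fst : X ⨯ X ⟶ X) 0 ≫ s)
          (prod.lift (prod.snd : X ⨯ X ⟶ X) 0 ≫ s) ≫ s' := by
      simp only [hf, prod.comp_lift_assoc, prod.comp_lift, prod.lift_fst, prod.lift_snd_assoc, prod.lift_fst_assoc, prod.lift_snd]; simp
    rw [h1, zero_comp' s hs2, zero_comp' s hs2]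
    simp
  have hg2 : prod.lift (prod.snd : X ⨯ X ⟶ X) (𝟙 (X ⨯ X)) ≫ f = s := by
    have h1 : prod.lift (prod.snd : X ⨯ X ⟶ X) (𝟙 (X ⨯ X)) ≫ f =
        prod.lift s (prod.lift (prod.snd : X ⨯ X ⟶ X) prod.snd ≫ s) ≫ s' := by
      simp only [hf, prod.comp_lift_assoc, prod.comp_lift, prod.lift_fst, prod.lift_snd_assoc, prod.lift_fst_assoc, prod.lift_snd]; simp
    rw [h1, diag_comp s hs1, zero_comp' s' hs'2]
  calc s = prod.lift (prod.snd : X ⨯ X ⟶ X) (𝟙 (X ⨯ X)) ≫ f := hg2.symm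
    _ = prod.lift (prod.snd : X ⨯ X ⟶ X) (𝟙 (X ⨯ X)) ≫ prod.snd ≫ u := by rw [← hu]
    _ = u := by rw [prod.lift_snd_assoc, Category.id_comp]
    _ = prod.lift (0 : X ⨯ X ⟶ X) (𝟙 (X ⨯ X)) ≫ prod.snd ≫ u := by rw [prod.lift_snd_assoc, Category.id_comp]
    _ = prod.lift (0 : X ⨯ X ⟶ X) (𝟙 (X ⨯ X)) ≫ f := by rw [← hu]
    _ = s' := hg1
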